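/- Let (X, ω) be a symplectic manifold with a Hamiltonian S^1-action with moment map μ : X → R. Define the S^1-action on X × C by t·(x,z) = (t·x, e^{-2πit} z) and Φ(x,z) = μ(x) − |z|^2. Then for ε ∈ R, the S^1-action on Φ^{-1}(ε) is free if and only if the S^1-action on μ^{-1}(ε) is free. -/
import Mathlib


open Complex

/-- Symplectic cutting: let `X` carry an `S¹ = ℝ/ℤ`-action (encoded as a `1`-periodic
`ℝ`-action `act`) with an invariant moment map `μ : X → ℝ`.  Define the `S¹`-action on
`X × ℂ` by `t·(x,z) = (t·x, e^{-2πit} z)` and `Φ(x,z) = μ(x) - |z|²`.  Then for any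
`ε ∈ ℝ`, the `S¹`-action on `Φ⁻¹(ε)` is free iff the `S¹`-action on `μ⁻¹(ε)` is free.
(Freeness of the `S¹`-action means that `act t x = x` forces `t ∈ ℤ`.) -/
theorem cut_action_free_iff {X : Type*} (act : ℝ → X → X)
    (hact0 : ∀ x, act 0 x = x)
    (hactadd : ∀ s t x, act (s + t) x = act s (act t x))
    (hactper : ∀ t x, act (t + 1) x = act t x)
    (μ : X → ℝ) (hμ : ∀ t x, μ (act t x) = μ x) (ε : ℝ) :
    (∀ p : X × ℂ, μ p.1 - Complex.normSq p.2 = ε →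
        ∀ t : ℝ, (act t p.1, Complex.exp (-(2 * Real.pi * Complex.I * t)) * p.2) = p →
          ∃ m : ℤ, t = m) ↔
      (∀ x : X, μ x = ε → ∀ t : ℝ, act t x = x → ∃ m : ℤ, t = m) := by
  constructor
  · intro h x hx t ht
    exact h (x, 0) (by simpa using hx) t (by simp [ht])
  · intro h p hp t ht
    obtain ⟨x, z⟩ := p
    simp only [Prod.mk.injEq] at ht
    obtain ⟨ht1, ht2⟩ := ht
    rcases eq_or_ne z 0 with hz | hz
    · exact h x (by simpa [hz] using hp) t ht1
    · have he : Complex.exp (-(2 * Real.pi * Complex.I * t)) = 1 :=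
        mul_right_cancel₀ hz (ht2.trans (one_mul z).symm)
      rw [Complex.exp_eq_one_iff] at he
      obtain ⟨n, hn⟩ := he
      refine ⟨-n, ?_⟩
      have hπ : (Real.pi : ℂ) ≠ 0 := by exact_mod_cast Real.pi_ne_zero
      have h2 : (2 : ℂ) * Real.pi * Complex.I ≠ 0 := by
        simp [Complex.I_ne_zero, hπ]
      have : (t : ℂ) = ((-n : ℤ) : ℂ) := by
        have h3 : (t : ℂ) * (2 * Real.pi * Complex.I) =
            ((-n : ℤ) : ℂ) * (2 * Real.pi * Complex.I) := by
          push_cast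
          linear_combination -hn
        exact mul_right_cancel₀ h2 h3
      exact_mod_cast this
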